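/- Let A be an n×n invertible symmetric real matrix, J a p×p symmetric real matrix with J·J = I_p, and ρ > 0. For any n×p real matrix X such that XᵀX and XᵀAX are invertible, the matrix G²_X := ρ⁻¹·A X Xᵀ A + I_n − X (XᵀX)⁻¹ Xᵀ is symmetric positive definite. -/

import Mathlib

open Matrix

lemma dp_self_nonneg {n : ℕ} (v : Fin n → ℝ) : 0 ≤ v ⬝ᵥ v :=
  Finset.sum_nonneg fun i _ => mul_self_nonneg (v i)

/-- For `X ∈ E` (i.e. `XᵀX` and `XᵀAX` invertible), the metric matrix
`G²_X = ρ⁻¹·AXXᵀA + I_n − X(XᵀX)⁻¹Xᵀ` is symmetric positive definite. -/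
theorem G2_posDef
    (n p : ℕ) (hpn : p ≤ n)
    (A : Matrix (Fin n) (Fin n) ℝ) (hA : Aᵀ = A) (hAinv : IsUnit A)
    (J : Matrix (Fin p) (Fin p) ℝ) (hJ : Jᵀ = J) (hJ2 : J * J = 1)
    (ρ : ℝ) (hρ : 0 < ρ)
    (X : Matrix (Fin n) (Fin p) ℝ)
    (hX1 : IsUnit (Xᵀ * X)) (hX2 : IsUnit (Xᵀ * A * X)) :
    (ρ⁻¹ • (A * X * Xᵀ * A) + 1 - X * (Xᵀ * X)⁻¹ * Xᵀ).PosDef := by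
  have hX1d : IsUnit (Xᵀ * X).det := (Matrix.isUnit_iff_isUnit_det _).mp hX1
  have hX2d : IsUnit (Xᵀ * A * X).det := (Matrix.isUnit_iff_isUnit_det _).mp hX2
  set B : Matrix (Fin p) (Fin n) ℝ := Xᵀ * A with hB
  have hBT : Bᵀ = A * X := by
    rw [hB, transpose_mul, transpose_transpose, hA]
  have hinvXX' : (Xᵀ * X)⁻¹ * (Xᵀ * X) = 1 := nonsing_inv_mul _ hX1d
  set P : Matrix (Fin n) (Fin n) ℝ := X * (Xᵀ * X)⁻¹ * Xᵀ with hP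
  have hPT : Pᵀ = P := by
    rw [hP, transpose_mul, transpose_mul, transpose_transpose,
      transpose_nonsing_inv, transpose_mul, transpose_transpose, Matrix.mul_assoc]
  have hPP : P * P = P := by
    rw [hP]
    calc X * (Xᵀ * X)⁻¹ * Xᵀ * (X * (Xᵀ * X)⁻¹ * Xᵀ)
        = X * ((Xᵀ * X)⁻¹ * (Xᵀ * X) * ((Xᵀ * X)⁻¹ * Xᵀ)) := by
          simp only [Matrix.mul_assoc]
      _ = X * (Xᵀ * X)⁻¹ * Xᵀ := by
          rw [hinvXX', Matrix.one_mul, Matrix.mul_assoc]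
  set Q : Matrix (Fin n) (Fin n) ℝ := 1 - P with hQ
  have hQT : Qᵀ = Q := by rw [hQ, transpose_sub, transpose_one, hPT]
  have hQQ : Q * Q = Q := by
    have : (1 - P) * (1 - P) = 1 - P := by
      simp only [Matrix.sub_mul, Matrix.mul_sub, Matrix.one_mul,
        Matrix.mul_one, hPP, sub_self, sub_zero]
    rw [hQ, this]
  have hG : ρ⁻¹ • (A * X * Xᵀ * A) + 1 - X * (Xᵀ * X)⁻¹ * Xᵀ
      = ρ⁻¹ • (Bᵀ * B) + Qᵀ * Q := by
    rw [hQT, hQQ, hQ, hBT, hP, add_sub_assoc]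
    congr 2
    simp only [Matrix.mul_assoc, hB]
  rw [hG]
  rw [Matrix.posDef_iff_dotProduct_mulVec]
  constructor
  · -- Hermitian
    simp [Matrix.IsHermitian, conjTranspose_eq_transpose_of_trivial,
      transpose_add, transpose_smul, transpose_mul, transpose_transpose, hQT]
  · intro x hx
    have key : star x ⬝ᵥ (ρ⁻¹ • (Bᵀ * B) + Qᵀ * Q) *ᵥ x
        = ρ⁻¹ * ((B *ᵥ x) ⬝ᵥ (B *ᵥ x)) + (Q *ᵥ x) ⬝ᵥ (Q *ᵥ x) := by
      simp only [star_trivial, add_mulVec, smul_mulVec, dotProduct_add,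
        dotProduct_smul, ← mulVec_mulVec, dotProduct_mulVec, vecMul_transpose,
        smul_eq_mul]
    rw [key]
    have h1 : 0 ≤ (B *ᵥ x) ⬝ᵥ (B *ᵥ x) := dp_self_nonneg _
    have h2 : 0 ≤ (Q *ᵥ x) ⬝ᵥ (Q *ᵥ x) := dp_self_nonneg _
    rcases lt_or_eq_of_le h2 with h2' | h2'
    · have : 0 ≤ ρ⁻¹ * ((B *ᵥ x) ⬝ᵥ (B *ᵥ x)) :=
        mul_nonneg (le_of_lt (inv_pos.mpr hρ)) h1
      linarith
    rcases lt_or_eq_of_le h1 with h1' | h1'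
    · have : 0 < ρ⁻¹ * ((B *ᵥ x) ⬝ᵥ (B *ᵥ x)) := mul_pos (inv_pos.mpr hρ) h1'
      linarith
    -- both inner products are zero: derive a contradiction
    exfalso
    have hBx : B *ᵥ x = 0 := dotProduct_self_eq_zero.mp h1'.symm
    have hQx : Q *ᵥ x = 0 := dotProduct_self_eq_zero.mp h2'.symm
    have hxP : x = P *ᵥ x := by
      have h : (1 - P) *ᵥ x = 0 := hQx
      rw [sub_mulVec, one_mulVec, sub_eq_zero] at h
      exact h
    set w : Fin p → ℝ := ((Xᵀ * X)⁻¹ * Xᵀ) *ᵥ x with hw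
    have hxw : x = X *ᵥ w := by
      rw [hw, mulVec_mulVec, ← Matrix.mul_assoc, ← hP]; exact hxP
    have hzero : (B * X) *ᵥ w = 0 := by
      rw [← mulVec_mulVec, ← hxw, hBx]
    have hw0 : w = 0 := by
      have h := congrArg (fun v => (B * X)⁻¹ *ᵥ v) hzero
      simpa [mulVec_mulVec, nonsing_inv_mul _ hX2d] using h
    exact hx (by rw [hxw, hw0, mulVec_zero])
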